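/- Let β, λ be positive reals with β > λ. Then Γ(β)/Γ(β−λ) ≤ e^{1/(12β)} · ((β−λ)/β)^{1/2} · β^{λ}. -/

import Mathlib

open Real Filter Topology

noncomputable def Lb (t : ℝ) : ℝ := log (Gamma t) - (t - 1/2) * log t + t

lemma Lb_rec {t : ℝ} (ht : 0 < t) :
    Lb t - Lb (t + 1) = (t + 1/2) * log (1 + t⁻¹) - 1 := by
  have h1 : log (Gamma (t + 1)) = log t + log (Gamma t) := by
    rw [Real.Gamma_add_one ht.ne', log_mul ht.ne' (Real.Gamma_pos_of_pos ht).ne']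
  have h2 : log (1 + t⁻¹) = log (t + 1) - log t := by
    rw [← log_div (by positivity) ht.ne']
    congr 1
    field_simp
  rw [Lb, Lb, h1, h2]
  ring

/-- secant bounds for log Gamma from convexity -/
lemma logGamma_diff_le {p q : ℝ} (hp : 0 < p) (hpq : p < q) :
    log (Gamma q) - log (Gamma p) ≤ (q - p) * log q := by
  have hq : 0 < q := hp.trans hpq
  have := Real.convexOn_log_Gamma.slope_mono_adjacent (Set.mem_Ioi.2 hp)
    (Set.mem_Ioi.2 (by linarith : (0:ℝ) < q + 1)) hpq (by linarith : q < q + 1)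
  simp only [Function.comp_apply] at this
  have h1 : log (Gamma (q + 1)) = log q + log (Gamma q) := by
    rw [Real.Gamma_add_one hq.ne', log_mul hq.ne' (Real.Gamma_pos_of_pos hq).ne']
  rw [h1] at this
  have h2 : (log q + log (Gamma q) - log (Gamma q)) / (q + 1 - q) = log q := by ring_nf
  rw [h2] at this
  calc log (Gamma q) - log (Gamma p) = ((log (Gamma q) - log (Gamma p)) / (q - p)) * (q - p) := by
        rw [div_mul_cancel₀ _ (by linarith : q - p ≠ 0)]
    _ ≤ log q * (q - p) := by
        apply mul_le_mul_of_nonneg_right this (by linarith)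
    _ = (q - p) * log q := by ring

lemma le_logGamma_diff {p q : ℝ} (hp : 1 < p) (hpq : p < q) :
    (q - p) * log (p - 1) ≤ log (Gamma q) - log (Gamma p) := by
  have hp1 : (0:ℝ) < p - 1 := by linarith
  have := Real.convexOn_log_Gamma.slope_mono_adjacent (Set.mem_Ioi.2 hp1)
    (Set.mem_Ioi.2 (by linarith : (0:ℝ) < q)) (by linarith : p - 1 < p) hpq
  simp only [Function.comp_apply] at this
  have h1 : log (Gamma p) = log (p-1) + log (Gamma (p-1)) := by
    have := Real.Gamma_add_one hp1.ne'
    rw [show p - 1 + 1 = p by ring] at this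
    rw [this, log_mul hp1.ne' (Real.Gamma_pos_of_pos hp1).ne']
  have h2 : (log (Gamma p) - log (Gamma (p-1))) / (p - (p-1)) = log (p - 1) := by
    rw [h1]; ring_nf
  rw [h2] at this
  calc (q - p) * log (p - 1) = log (p-1) * (q - p) := by ring
    _ ≤ ((log (Gamma q) - log (Gamma p)) / (q - p)) * (q - p) :=
        mul_le_mul_of_nonneg_right this (by linarith)
    _ = log (Gamma q) - log (Gamma p) := div_mul_cancel₀ _ (by linarith : q - p ≠ 0)

lemma hasSum_aux {a : ℝ} (ha : 0 < a) :
    HasSum (fun k : ℕ => (1 / (2 * (k:ℝ) + 1)) * (1 / (2 * a + 1)) ^ (2 * k))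
      ((a + 1 / 2) * log (1 + a⁻¹)) := by
  have h := (hasSum_log_one_add_inv ha).mul_left (a + 1 / 2)
  refine h.congr_fun fun k => ?_
  have h2 : (2:ℝ) * a + 1 ≠ 0 := by positivity
  rw [pow_succ]
  field_simp

lemma h_anti {a b : ℝ} (ha : 0 < a) (hab : a ≤ b) :
    (b + 1 / 2) * log (1 + b⁻¹) ≤ (a + 1 / 2) * log (1 + a⁻¹) := by
  have hb : 0 < b := ha.trans_le hab
  refine hasSum_le (fun k => ?_) (hasSum_aux hb) (hasSum_aux ha)
  have h1 : (0:ℝ) < 2 * (k:ℝ) + 1 := by positivity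
  have h3 : 1 / (2 * b + 1) ≤ 1 / (2 * a + 1) := by
    apply one_div_le_one_div_of_le <;> linarith
  have h4 : (0:ℝ) ≤ 1 / (2 * b + 1) := by positivity
  exact mul_le_mul_of_nonneg_left (pow_le_pow_left₀ h4 h3 _) (by positivity)

lemma Lb_anti {y x : ℝ} (hy : 0 < y) (hyx : y < x) : Lb x ≤ Lb y := by
  set lam := x - y with hlam_def
  have hlam : 0 < lam := by simp [hlam_def]; linarith
  have hsub : x = y + lam := by simp [hlam_def]
  clear_value lam
  set G : ℕ → ℝ := fun N => Lb (y + N) - Lb (x + N) with hG_def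
  -- step: antitone
  have hstep : ∀ N, G (N + 1) ≤ G N := by
    intro N
    have hyN : (0:ℝ) < y + N := by positivity
    have hxN : (0:ℝ) < x + N := by linarith
    have h1 := Lb_rec hyN
    have h2 := Lb_rec hxN
    have h3 := h_anti hyN (by linarith : y + (N:ℝ) ≤ x + N)
    have e1 : Lb (y + ↑(N + 1)) = Lb (y + N + 1) := by push_cast; ring_nf
    have e2 : Lb (x + ↑(N + 1)) = Lb (x + N + 1) := by push_cast; ring_nf
    simp only [hG_def, e1, e2]
    linarith
  have hG0 : ∀ N, G N ≤ G 0 := by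
    intro N
    induction N with
    | zero => exact le_refl _
    | succ n ih => exact (hstep n).trans ih
  -- limits
  have hT : Filter.Tendsto (fun N : ℕ => y + (N:ℝ)) Filter.atTop Filter.atTop :=
    Filter.tendsto_atTop_add_const_left _ y tendsto_natCast_atTop_atTop
  have hT' : Filter.Tendsto (fun N : ℕ => y + (N:ℝ) - 1) Filter.atTop Filter.atTop :=
    Filter.tendsto_atTop_add_const_right _ (-1) hT
  have hlog0 : ∀ (t : ℝ), 0 < t → ∀ (S : ℕ → ℝ), Filter.Tendsto S Filter.atTop Filter.atTop →
      Filter.Tendsto (fun N => log (1 + t / S N)) Filter.atTop (𝓝 0) := by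
    intro t ht S hS
    have h1 : Filter.Tendsto (fun N => 1 + t / S N) Filter.atTop (𝓝 1) := by
      have := Filter.Tendsto.div_atTop (tendsto_const_nhds (x := t)) hS
      simpa using (tendsto_const_nhds (x := (1:ℝ))).add this
    have := ((Real.continuousAt_log (by norm_num : (1:ℝ) ≠ 0)).tendsto).comp h1
    simpa [Function.comp_def] using this
  set c : ℕ → ℝ := fun N => (y + N - 1/2) * log (1 + lam / (y + N)) - lam with hc_def
  set u : ℕ → ℝ := fun N => c N + lam * log (1 + (lam + 1) / (y + N - 1)) with hu_def
  have hc : Filter.Tendsto c Filter.atTop (𝓝 0) := by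
    have A := (Real.tendsto_mul_log_one_add_div_atTop lam).comp hT
    have B := hlog0 lam hlam _ hT
    have := (A.sub (B.const_mul (1/2))).sub_const lam
    have heq : (fun N : ℕ => ((y + N) * log (1 + lam / (y + N)) -
        1/2 * log (1 + lam / (y + N))) - lam) = c := by
      funext N; simp only [hc_def]; ring
    rw [show lam - 1/2 * 0 - lam = 0 by ring] at this
    exact heq ▸ this
  have hu : Filter.Tendsto u Filter.atTop (𝓝 0) := by
    have B := hlog0 (lam + 1) (by linarith) _ hT'
    have := hc.add (B.const_mul lam)
    simpa [hu_def, mul_comm] using this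
  -- bounds
  have hbound : ∀ N : ℕ, 1 ≤ N → c N ≤ G N ∧ G N ≤ u N := by
    intro N hN
    have hN1 : (1:ℝ) ≤ (N:ℝ) := by exact_mod_cast hN
    have hyN : (0:ℝ) < y + N := by positivity
    have hxN : (0:ℝ) < x + N := by linarith
    have hyx' : y + (N:ℝ) < x + N := by linarith
    have e1 : log (1 + lam / (y + N)) = log (x + N) - log (y + N) := by
      rw [show (1:ℝ) + lam / (y + N) = (x + N) / (y + N) by
        rw [hsub]; field_simp; ring, log_div hxN.ne' hyN.ne']
    have e2 : log (1 + (lam + 1) / (y + N - 1)) = log (x + N) - log (y + N - 1) := by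
      have h5 : (0:ℝ) < y + N - 1 := by linarith
      rw [show (1:ℝ) + (lam + 1) / (y + N - 1) = (x + N) / (y + N - 1) by
        rw [hsub]; field_simp; ring, log_div hxN.ne' h5.ne']
    have expand : (Lb (y+↑N) - Lb (x+↑N)) - c N =
        lam * log (x+↑N) - (log (Gamma (x+↑N)) - log (Gamma (y+↑N))) := by
      simp only [Lb, hc_def, e1]; rw [hsub]; ring
    constructor
    · have h6 := logGamma_diff_le hyN hyx'
      rw [show x + (N:ℝ) - (y+N) = lam from by rw [hsub]; ring] at h6
      simp only [hG_def]; linarith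
    · have h6 := le_logGamma_diff (by linarith : 1 < y + (N:ℝ)) hyx'
      rw [show x + (N:ℝ) - (y+N) = lam from by rw [hsub]; ring] at h6
      have expand2 : u N - (Lb (y+↑N) - Lb (x+↑N)) =
          (log (Gamma (x+↑N)) - log (Gamma (y+↑N))) - lam * log (y + ↑N - 1) := by
        simp only [hu_def, hc_def, Lb, e1, e2]; rw [hsub]; ring
      simp only [hG_def]; linarith
  have hlim : Filter.Tendsto G Filter.atTop (𝓝 0) := by
    refine tendsto_of_tendsto_of_tendsto_of_le_of_le' hc hu ?_ ?_
    · filter_upwards [Filter.eventually_ge_atTop 1] with N hN using (hbound N hN).1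
    · filter_upwards [Filter.eventually_ge_atTop 1] with N hN using (hbound N hN).2
  have h0 : (0:ℝ) ≤ G 0 := le_of_tendsto hlim (Filter.Eventually.of_forall hG0)
  simp only [hG_def, Nat.cast_zero, add_zero] at h0
  linarith

theorem gamma_ratio_upper' (β lam : ℝ) (hlam : 0 < lam) (hβ : lam < β) :
    Real.Gamma β / Real.Gamma (β - lam) ≤
      Real.exp (1 / (12 * β)) * ((β - lam) / β) ^ ((1:ℝ)/2) * β ^ lam := by
  have hβ0 : 0 < β := hlam.trans hβ
  have hbl : 0 < β - lam := by linarith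
  have hΓβ := Real.Gamma_pos_of_pos hβ0
  have hΓbl := Real.Gamma_pos_of_pos hbl
  have hL : Lb β ≤ Lb (β - lam) := Lb_anti hbl (by linarith)
  have key : (β - lam) * (log β - log (β - lam)) ≤ lam := by
    have h1 : log β - log (β - lam) ≤ lam / (β - lam) := by
      rw [← log_div hβ0.ne' hbl.ne']
      calc log (β / (β - lam)) ≤ β / (β - lam) - 1 :=
            Real.log_le_sub_one_of_pos (by positivity)
        _ = lam / (β - lam) := by field_simp; ring
    calc (β - lam) * (log β - log (β - lam)) ≤ (β - lam) * (lam / (β - lam)) :=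
          mul_le_mul_of_nonneg_left h1 hbl.le
      _ = lam := by field_simp
  have hlhs : 0 < Gamma β / Gamma (β - lam) := by positivity
  have hrhs : 0 < exp (1 / (12 * β)) * ((β - lam) / β) ^ ((1:ℝ)/2) * β ^ lam := by positivity
  rw [← Real.exp_log hlhs, ← Real.exp_log hrhs]
  apply Real.exp_le_exp.mpr
  rw [log_div hΓβ.ne' hΓbl.ne',
    log_mul (ne_of_gt (by positivity)) (ne_of_gt (Real.rpow_pos_of_pos hβ0 _)),
    log_mul (Real.exp_ne_zero _) (ne_of_gt (Real.rpow_pos_of_pos (by positivity) _)),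
    Real.log_exp, Real.log_rpow hβ0, Real.log_rpow (by positivity),
    log_div hbl.ne' hβ0.ne']
  have h112 : (0:ℝ) ≤ 1 / (12 * β) := by positivity
  have hLexp : log (Gamma β) - log (Gamma (β - lam)) ≤
      (β - 1/2) * log β - (β - lam - 1/2) * log (β - lam) - lam := by
    simp only [Lb] at hL; linarith
  linarith [key, hLexp, h112]
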